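/- arXiv:1212.5137 — 2 statements merged into one kernel-verified Lean document; each statement's English description precedes it below -/
import Mathlib

section
/- Let U be a bounded smooth domain in ℝ⁵ = ℍ×ℝ whose closure does not contain the origin, let a ∈ ℝ and let f : ℝ → ℝ be continuous. (i) If v ∈ C²(U) ∩ C(closure U) satisfies −Δv(x) + (a/(4|x|))v(x) = (1/(4|x|))f(v(x)) for all x ∈ U and v = 0 on ∂U, then u := v ∘ π belongs to C²(Ω) ∩ C(closure Ω), where Ω := π^{−1}(U), and satisfies −Δu + au = f(u) in Ω and u = 0 on ∂Ω. (ii) Conversely, if v : U → ℝ is of class C² and u := v ∘ π satisfies −Δu + au = f(u) in Ω, then v satisfies −Δv + (a/(4|x|))v = (1/(4|x|))f(v) in U. -/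
/-- The Laplacian (trace of the second derivative) of a real-valued function on a
finite-dimensional Euclidean space, computed in the standard orthonormal coordinates. -/
noncomputable def lap {ι : Type*} [Fintype ι] [DecidableEq ι]
    (u : EuclideanSpace ℝ ι → ℝ) (x : EuclideanSpace ℝ ι) : ℝ :=
  ∑ i, iteratedFDeriv ℝ 2 u x ![EuclideanSpace.single i 1, EuclideanSpace.single i 1]

/-- A bounded smooth domain: a nonempty bounded open set, each of whose boundary points
admits a smooth local defining function with nonvanishing differential (so that the
boundary is a C^∞ hypersurface). -/
structure IsSmoothDomain {E : Type*} [NormedAddCommGroup E] [NormedSpace ℝ E]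
    (Ω : Set E) : Prop where
  isOpen : IsOpen Ω
  isBounded : Bornology.IsBounded Ω
  nonempty : Ω.Nonempty
  smooth_boundary : ∀ x ∈ frontier Ω, ∃ f : E → ℝ, ContDiff ℝ (⊤ : ℕ∞) f ∧
    fderiv ℝ f x ≠ 0 ∧ ∀ᶠ y in nhds x, (y ∈ Ω ↔ f y < 0)

/-- The first quaternion coordinate of a point of ℝ⁸ = ℍ×ℍ. -/
def quat1 (x : EuclideanSpace ℝ (Fin 8)) : Quaternion ℝ := ⟨x 0, x 1, x 2, x 3⟩

/-- The second quaternion coordinate of a point of ℝ⁸ = ℍ×ℍ. -/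
def quat2 (x : EuclideanSpace ℝ (Fin 8)) : Quaternion ℝ := ⟨x 4, x 5, x 6, x 7⟩

/-- The Hopf map π : ℝ⁸ = ℍ×ℍ → ℝ⁵ = ℍ×ℝ, π(z₁,z₂) = (2·conj(z₁)·z₂, |z₁|² − |z₂|²). -/
noncomputable def hopfH (x : EuclideanSpace ℝ (Fin 8)) : EuclideanSpace ℝ (Fin 5) :=
  WithLp.toLp 2 ![(2 * star (quat1 x) * quat2 x).re,
    (2 * star (quat1 x) * quat2 x).imI,
    (2 * star (quat1 x) * quat2 x).imJ,
    (2 * star (quat1 x) * quat2 x).imK,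
    ‖quat1 x‖ ^ 2 - ‖quat2 x‖ ^ 2]


noncomputable section
open scoped BigOperators

abbrev E8 := EuclideanSpace ℝ (Fin 8)
abbrev E5 := EuclideanSpace ℝ (Fin 5)

lemma fin5cases {P : Fin 5 → Prop} (h0 : P 0) (h1 : P 1) (h2 : P 2) (h3 : P 3) (h4 : P 4) :
    ∀ j, P j := by intro j; fin_cases j; exacts [h0, h1, h2, h3, h4]

section AppLemmas
variable {α : Type*} (a b c d e f g h : α)
lemma appA0 : (![a,b,c,d,e] : Fin 5 → α) 0 = a := rfl
lemma appA1 : (![a,b,c,d,e] : Fin 5 → α) 1 = b := rfl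
lemma appA2 : (![a,b,c,d,e] : Fin 5 → α) 2 = c := rfl
lemma appA3 : (![a,b,c,d,e] : Fin 5 → α) 3 = d := rfl
lemma appA4 : (![a,b,c,d,e] : Fin 5 → α) 4 = e := rfl
lemma appB0 : (![a,b,c,d,e,f,g,h] : Fin 8 → α) 0 = a := rfl
lemma appB1 : (![a,b,c,d,e,f,g,h] : Fin 8 → α) 1 = b := rfl
lemma appB2 : (![a,b,c,d,e,f,g,h] : Fin 8 → α) 2 = c := rfl
lemma appB3 : (![a,b,c,d,e,f,g,h] : Fin 8 → α) 3 = d := rfl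
lemma appB4 : (![a,b,c,d,e,f,g,h] : Fin 8 → α) 4 = e := rfl
lemma appB5 : (![a,b,c,d,e,f,g,h] : Fin 8 → α) 5 = f := rfl
lemma appB6 : (![a,b,c,d,e,f,g,h] : Fin 8 → α) 6 = g := rfl
lemma appB7 : (![a,b,c,d,e,f,g,h] : Fin 8 → α) 7 = h := rfl
end AppLemmas

def coefM (z : E8) : Fin 5 → Fin 8 → ℝ :=
![![2*z 4, 2*z 5, 2*z 6, 2*z 7, 2*z 0, 2*z 1, 2*z 2, 2*z 3],
  ![2*z 5, -2*z 4, -2*z 7, 2*z 6, -2*z 1, 2*z 0, 2*z 3, -2*z 2],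
  ![2*z 6, 2*z 7, -2*z 4, -2*z 5, -2*z 2, -2*z 3, 2*z 0, 2*z 1],
  ![2*z 7, -2*z 6, 2*z 5, -2*z 4, -2*z 3, 2*z 2, -2*z 1, 2*z 0],
  ![2*z 0, 2*z 1, 2*z 2, 2*z 3, -2*z 4, -2*z 5, -2*z 6, -2*z 7]]

def rowC (z : E8) (j : Fin 5) : E8 →L[ℝ] ℝ := ∑ i, coefM z j i • EuclideanSpace.proj i

def Dpi (z : E8) : E8 →L[ℝ] E5 :=
  (EuclideanSpace.equiv (Fin 5) ℝ).symm.toContinuousLinearMap.comp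
    (ContinuousLinearMap.pi fun j => rowC z j)

lemma Dpi_apply (z h : E8) (j : Fin 5) : Dpi z h j = ∑ i, coefM z j i * h i := by
  simp [Dpi, rowC, ContinuousLinearMap.sum_apply]

lemma qnorm (q : Quaternion ℝ) : ‖q‖^2 = q.re^2 + q.imI^2 + q.imJ^2 + q.imK^2 := by
  rw [sq, ← Quaternion.normSq_eq_norm_mul_self, Quaternion.normSq_def']
lemma h0' (x : E8) : hopfH x 0 = 2*(x 0 * x 4 + x 1 * x 5 + x 2 * x 6 + x 3 * x 7) := by
  show (2 * star (quat1 x) * quat2 x).re = _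
  simp [two_mul, add_mul, Quaternion.re_mul]; simp [quat1, quat2]; try ring
lemma h1' (x : E8) : hopfH x 1 = 2*(x 0 * x 5 - x 1 * x 4 - x 2 * x 7 + x 3 * x 6) := by
  show (2 * star (quat1 x) * quat2 x).imI = _
  simp [two_mul, add_mul, Quaternion.imI_mul]; simp [quat1, quat2]; try ring
lemma h2' (x : E8) : hopfH x 2 = 2*(x 0 * x 6 + x 1 * x 7 - x 2 * x 4 - x 3 * x 5) := by
  show (2 * star (quat1 x) * quat2 x).imJ = _
  simp [two_mul, add_mul, Quaternion.imJ_mul]; simp [quat1, quat2]; try ring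
lemma h3' (x : E8) : hopfH x 3 = 2*(x 0 * x 7 - x 1 * x 6 + x 2 * x 5 - x 3 * x 4) := by
  show (2 * star (quat1 x) * quat2 x).imK = _
  simp [two_mul, add_mul, Quaternion.imK_mul]; simp [quat1, quat2]; try ring
lemma h4' (x : E8) : hopfH x 4 = x 0^2 + x 1^2 + x 2^2 + x 3^2 - (x 4^2+x 5^2+x 6^2+x 7^2) := by
  show ‖quat1 x‖^2 - ‖quat2 x‖^2 = _
  simp [qnorm]; simp [quat1, quat2]

lemma hopf_expand (z h : E8) :
    hopfH (z + h) = hopfH z + Dpi z h + (2:ℝ)⁻¹ • Dpi h h := by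
  ext j
  simp only [PiLp.add_apply, PiLp.smul_apply, smul_eq_mul]
  revert j
  apply fin5cases <;>
  · simp only [PiLp.add_apply, h0', h1', h2', h3', h4', Dpi_apply, Fin.sum_univ_eight, coefM,
      appA0, appA1, appA2, appA3, appA4, appB0, appB1, appB2, appB3, appB4, appB5, appB6, appB7]
    ring

lemma Dpi_symm (z h : E8) : Dpi z h = Dpi h z := by
  ext j
  revert j
  apply fin5cases <;>
  · simp only [Dpi_apply, Fin.sum_univ_eight, coefM,
      appA0, appA1, appA2, appA3, appA4, appB0, appB1, appB2, appB3, appB4, appB5, appB6, appB7]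
    ring

lemma coef_orth (z : E8) (j k : Fin 5) :
    ∑ i, coefM z j i * coefM z k i =
      (if j = k then (4:ℝ) * ∑ i, (z i)^2 else 0) := by
  revert j
  apply fin5cases <;> (revert k; apply fin5cases) <;>
  · simp only [coefM, Fin.sum_univ_eight, Fin.reduceEq, if_true, if_false, reduceIte,
      appA0, appA1, appA2, appA3, appA4, appB0, appB1, appB2, appB3, appB4, appB5, appB6, appB7]
    norm_num [Fin.isValue]
    try decide
    try ring

lemma diag_zero (j : Fin 5) :
    ∑ i : Fin 8, coefM (EuclideanSpace.single i (1:ℝ)) j i = 0 := by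
  revert j
  apply fin5cases <;>
  · simp only [coefM, Fin.sum_univ_eight, EuclideanSpace.single_apply, Fin.reduceEq,
      appA0, appA1, appA2, appA3, appA4, appB0, appB1, appB2, appB3, appB4, appB5, appB6, appB7]
    norm_num [Fin.isValue]
    try decide

lemma norm_hopf (z : E8) : ‖hopfH z‖ = ∑ i, (z i)^2 := by
  have hn : ‖hopfH z‖^2 = (∑ i, (z i)^2)^2 := by
    rw [EuclideanSpace.norm_eq]
    rw [Real.sq_sqrt (by positivity)]
    simp only [Real.norm_eq_abs, sq_abs]
    rw [Fin.sum_univ_five]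
    simp only [h0', h1', h2', h3', h4', Fin.sum_univ_eight]
    ring
  have h1 : (0:ℝ) ≤ ‖hopfH z‖ := norm_nonneg _
  have h2 : (0:ℝ) ≤ ∑ i, (z i)^2 := by positivity
  nlinarith [hn]

lemma Dpi_add (z z' : E8) : Dpi (z + z') = Dpi z + Dpi z' := by
  refine ContinuousLinearMap.ext fun h => ?_
  ext j
  revert j
  apply fin5cases <;>
  · simp only [ContinuousLinearMap.add_apply, PiLp.add_apply, Dpi_apply, Fin.sum_univ_eight, coefM,
      appA0, appA1, appA2, appA3, appA4, appB0, appB1, appB2, appB3, appB4, appB5, appB6, appB7]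
    ring

lemma Dpi_smul (c : ℝ) (z : E8) : Dpi (c • z) = c • Dpi z := by
  refine ContinuousLinearMap.ext fun h => ?_
  ext j
  revert j
  apply fin5cases <;>
  · simp only [ContinuousLinearMap.smul_apply, PiLp.smul_apply, Dpi_apply, Fin.sum_univ_eight,
      coefM, smul_eq_mul,
      appA0, appA1, appA2, appA3, appA4, appB0, appB1, appB2, appB3, appB4, appB5, appB6, appB7]
    ring

def DpiLin : E8 →ₗ[ℝ] (E8 →L[ℝ] E5) where
  toFun := Dpi
  map_add' := Dpi_add
  map_smul' := Dpi_smul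

def DpiT : E8 →L[ℝ] (E8 →L[ℝ] E5) := LinearMap.toContinuousLinearMap DpiLin

lemma hopf_zero : hopfH 0 = 0 := by
  ext j
  revert j
  apply fin5cases <;>
  · simp only [h0', h1', h2', h3', h4']
    norm_num

lemma Dpi_zero_left (h : E8) : Dpi 0 h = 0 := by
  ext j
  revert j
  apply fin5cases <;>
  · simp only [Dpi_apply, Fin.sum_univ_eight, coefM,
      appA0, appA1, appA2, appA3, appA4, appB0, appB1, appB2, appB3, appB4, appB5, appB6, appB7]
    norm_num

lemma hopf_eq (x : E8) : hopfH x = (2:ℝ)⁻¹ • Dpi x x := by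
  have := hopf_expand 0 x
  simpa [hopf_zero, Dpi_zero_left] using this

lemma contDiff_hopf {n : ℕ∞} : ContDiff ℝ n hopfH := by
  have : hopfH = fun x => (2:ℝ)⁻¹ • (DpiT x) x := by
    funext x; exact hopf_eq x
  rw [this]
  exact (DpiT.contDiff.clm_apply contDiff_id).const_smul _

lemma hasFDerivAt_hopf (z : E8) : HasFDerivAt hopfH (Dpi z) z := by
  rw [hasFDerivAt_iff_isLittleO_nhds_zero]
  have key : ∀ h : E8, hopfH (z + h) - hopfH z - Dpi z h = (2:ℝ)⁻¹ • Dpi h h := by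
    intro h; rw [hopf_expand]; abel
  have big : (fun h : E8 => hopfH (z + h) - hopfH z - Dpi z h) =O[nhds 0]
      fun h => ‖h‖ * ‖h‖ := by
    refine Asymptotics.IsBigO.of_bound ‖DpiT‖ (Filter.Eventually.of_forall fun h => ?_)
    rw [key h]
    have h1 : ‖(2:ℝ)⁻¹ • Dpi h h‖ ≤ ‖Dpi h h‖ := by
      rw [norm_smul]
      have : ‖(2:ℝ)⁻¹‖ = 2⁻¹ := by norm_num
      rw [this]; nlinarith [norm_nonneg (Dpi h h)]
    have h2 : ‖Dpi h h‖ ≤ ‖Dpi h‖ * ‖h‖ := (Dpi h).le_opNorm h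
    have h3 : ‖Dpi h‖ ≤ ‖DpiT‖ * ‖h‖ := DpiT.le_opNorm h
    have h4 : ‖(‖h‖ * ‖h‖ : ℝ)‖ = ‖h‖ * ‖h‖ := by
      rw [Real.norm_eq_abs, abs_of_nonneg (by positivity)]
    rw [h4]
    nlinarith [norm_nonneg h, norm_nonneg (Dpi h), norm_nonneg DpiT]
  have lit : (fun h : E8 => ‖h‖ * ‖h‖) =o[nhds 0] fun h => h := by
    rw [← Asymptotics.isLittleO_norm_right]
    have t1 : (fun h : E8 => ‖h‖) =o[nhds 0] fun _ => (1:ℝ) :=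
      (Asymptotics.isLittleO_one_iff ℝ).mpr tendsto_norm_zero
    have := t1.mul_isBigO (Asymptotics.isBigO_refl (fun h : E8 => ‖h‖) (nhds 0))
    simpa using this
  exact big.trans_isLittleO lit

lemma sum_diag_zero :
    ∑ i : Fin 8, Dpi (EuclideanSpace.single i (1:ℝ)) (EuclideanSpace.single i (1:ℝ)) = (0 : E5) := by
  ext j
  have := map_sum (EuclideanSpace.proj j : E5 →L[ℝ] ℝ)
    (fun i : Fin 8 => Dpi (EuclideanSpace.single i (1:ℝ)) (EuclideanSpace.single i (1:ℝ)))
    Finset.univ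
  have happ : ∀ y : E5, (EuclideanSpace.proj j : E5 →L[ℝ] ℝ) y = y j := fun y => rfl
  simp only [happ] at this
  rw [show (0:E5) j = 0 from rfl, this]
  have step : ∀ i : Fin 8,
      Dpi (EuclideanSpace.single i (1:ℝ)) (EuclideanSpace.single i (1:ℝ)) j =
        coefM (EuclideanSpace.single i (1:ℝ)) j i := by
    intro i
    rw [Dpi_apply]
    rw [Finset.sum_eq_single i]
    · simp [EuclideanSpace.single_apply]
    · intro b _ hb
      simp [EuclideanSpace.single_apply, hb]
    · simp
  simp only [step]
  simpa using diag_zero j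

lemma Dpi_single (z : E8) (i : Fin 8) (j : Fin 5) :
    Dpi z (EuclideanSpace.single i (1:ℝ)) j = coefM z j i := by
  rw [Dpi_apply]
  rw [Finset.sum_eq_single i]
  · simp [EuclideanSpace.single_apply]
  · intro b _ hb
    simp [EuclideanSpace.single_apply, hb]
  · simp

lemma e5_decomp (a : E5) :
    ∑ j : Fin 5, a j • EuclideanSpace.single j (1:ℝ) = a := by
  have := (EuclideanSpace.basisFun (Fin 5) ℝ).sum_repr a
  simpa [EuclideanSpace.basisFun_repr, EuclideanSpace.basisFun_apply] using this

lemma bilin_expand (H : E5 →L[ℝ] E5 →L[ℝ] ℝ) (a : E5) :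
    H a a = ∑ j : Fin 5, ∑ k : Fin 5,
      a j * a k * H (EuclideanSpace.single j 1) (EuclideanSpace.single k 1) := by
  have key : ∀ b : E5, H b a = ∑ k : Fin 5, a k * H b (EuclideanSpace.single k 1) := by
    intro b
    conv_lhs => rw [← e5_decomp a]
    rw [map_sum]
    exact Finset.sum_congr rfl fun k _ => by rw [map_smul]; simp
  have key2 : ∀ c : E5, H a c = ∑ j : Fin 5, a j * H (EuclideanSpace.single j 1) c := by
    intro c
    conv_lhs => rw [← e5_decomp a]
    rw [map_sum, ContinuousLinearMap.sum_apply]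
    refine Finset.sum_congr rfl fun j _ => ?_
    rw [map_smul, ContinuousLinearMap.smul_apply]; simp
  rw [key a]
  simp only [key2, Finset.mul_sum]
  rw [Finset.sum_comm]
  exact Finset.sum_congr rfl fun j _ => Finset.sum_congr rfl fun k _ => by ring

lemma lap_comp {U : Set E5} (hUo : IsOpen U) {v : E5 → ℝ} (hv : ContDiffOn ℝ 2 v U)
    {z : E8} (hz : hopfH z ∈ U) :
    lap (v ∘ hopfH) z = 4 * ‖hopfH z‖ * lap v (hopfH z) := by
  set x := hopfH z with hx
  have hvx : ContDiffAt ℝ 2 v x := hv.contDiffAt (hUo.mem_nhds hz)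
  set g := v ∘ hopfH with hg
  have hΩ : hopfH ⁻¹' U ∈ nhds z := (hUo.preimage (contDiff_hopf (n := 2)).continuous).mem_nhds hz
  -- first derivative of g near z
  have ev : ∀ᶠ y in nhds z, fderiv ℝ g y = (fderiv ℝ v (hopfH y)).comp (Dpi y) := by
    filter_upwards [hΩ] with y hy
    have hdv : DifferentiableAt ℝ v (hopfH y) :=
      (hv.contDiffAt (hUo.mem_nhds hy)).differentiableAt (by norm_num)
    exact (hdv.hasFDerivAt.comp y (hasFDerivAt_hopf y)).fderiv
  -- second derivative data
  have h2 : ContDiffAt ℝ 1 (fderiv ℝ v) x := hvx.fderiv_right (by norm_num)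
  have hdf : DifferentiableAt ℝ (fderiv ℝ v) x := h2.differentiableAt one_ne_zero
  set H := fderiv ℝ (fderiv ℝ v) x with hH
  have hF : HasFDerivAt (fun y => fderiv ℝ v (hopfH y)) (H.comp (Dpi z)) z :=
    hdf.hasFDerivAt.comp z (hasFDerivAt_hopf z)
  have hg2 : ContDiffAt ℝ 2 g z := hvx.comp z (contDiff_hopf (n := 2)).contDiffAt
  have hdg : DifferentiableAt ℝ (fderiv ℝ g) z :=
    (hg2.fderiv_right (by norm_num)).differentiableAt one_ne_zero
  -- second directional derivatives of g
  have main : ∀ e : E8, iteratedFDeriv ℝ 2 g z ![e, e] =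
      H (Dpi z e) (Dpi z e) + fderiv ℝ v x (Dpi e e) := by
    intro e
    have hG : HasFDerivAt (fun y => Dpi y e) (Dpi e) z := by
      have : (fun y : E8 => Dpi y e) = ⇑(Dpi e) := funext fun y => Dpi_symm y e
      rw [this]; exact (Dpi e).hasFDerivAt
    have happ := hF.clm_apply hG
    have t1 : fderiv ℝ (fun y => fderiv ℝ g y e) z =
        fderiv ℝ (fun y => fderiv ℝ v (hopfH y) (Dpi y e)) z := by
      apply Filter.EventuallyEq.fderiv_eq
      filter_upwards [ev] with y hy
      rw [hy]; rfl
    have t2 : fderiv ℝ (fun y => fderiv ℝ g y e) z e =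
        H (Dpi z e) (Dpi z e) + fderiv ℝ v x (Dpi e e) := by
      rw [t1, happ.fderiv]
      simp only [ContinuousLinearMap.add_apply, ContinuousLinearMap.comp_apply,
        ContinuousLinearMap.flip_apply]
      ring
    have t3 : fderiv ℝ (fun y => fderiv ℝ g y e) z =
        (fderiv ℝ (fderiv ℝ g) z).flip e := by
      have := fderiv_clm_apply hdg (differentiableAt_const e)
      simpa using this
    rw [iteratedFDeriv_two_apply]
    have m0 : (![e, e] : Fin 2 → E8) 0 = e := rfl
    have m1 : (![e, e] : Fin 2 → E8) 1 = e := rfl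
    rw [m0, m1]
    have : fderiv ℝ (fderiv ℝ g) z e e = (fderiv ℝ (fderiv ℝ g) z).flip e e := rfl
    rw [this, ← t3, t2]
  -- assemble the laplacian
  have lapg : lap g z = (∑ i : Fin 8,
        H (Dpi z (EuclideanSpace.single i 1)) (Dpi z (EuclideanSpace.single i 1)))
      + fderiv ℝ v x (∑ i : Fin 8, Dpi (EuclideanSpace.single i 1) (EuclideanSpace.single i 1)) := by
    simp only [lap]
    rw [map_sum (fderiv ℝ v x) (fun i : Fin 8 => Dpi (EuclideanSpace.single i 1) (EuclideanSpace.single i 1)) Finset.univ]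
    rw [← Finset.sum_add_distrib]
    exact Finset.sum_congr rfl fun i _ => main _
  rw [lapg, sum_diag_zero, map_zero, add_zero]
  -- expand via orthogonality
  have lapv : lap v x = ∑ j : Fin 5,
      H (EuclideanSpace.single j 1) (EuclideanSpace.single j 1) := by
    simp only [lap]
    refine Finset.sum_congr rfl fun j _ => ?_
    rw [iteratedFDeriv_two_apply]; rfl
  have exp1 : ∀ i : Fin 8,
      H (Dpi z (EuclideanSpace.single i 1)) (Dpi z (EuclideanSpace.single i 1)) =
      ∑ j : Fin 5, ∑ k : Fin 5, coefM z j i * coefM z k i *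
        H (EuclideanSpace.single j 1) (EuclideanSpace.single k 1) := by
    intro i
    rw [bilin_expand]
    simp only [Dpi_single]
  simp only [exp1]
  rw [Finset.sum_comm]
  have swap2 : ∀ j : Fin 5, (∑ i : Fin 8, ∑ k : Fin 5, coefM z j i * coefM z k i *
      H (EuclideanSpace.single j 1) (EuclideanSpace.single k 1)) =
      ∑ k : Fin 5, (∑ i : Fin 8, coefM z j i * coefM z k i) *
        H (EuclideanSpace.single j 1) (EuclideanSpace.single k 1) := by
    intro j
    rw [Finset.sum_comm]
    exact Finset.sum_congr rfl fun k _ => by rw [Finset.sum_mul]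
  have hnorm : ‖x‖ = ∑ i, (z i)^2 := by rw [hx]; exact norm_hopf z
  simp only [swap2, coef_orth, ite_mul, zero_mul, Finset.sum_ite_eq, Finset.mem_univ, if_true,
    lapv, hnorm, Finset.mul_sum]

lemma hopf_surj (x : E5) : ∃ z : E8, hopfH z = x := by
  obtain ⟨r, hr0, hr2⟩ : ∃ r : ℝ, 0 ≤ r ∧ r^2 = x 0^2 + x 1^2 + x 2^2 + x 3^2 + x 4^2 :=
    ⟨Real.sqrt _, Real.sqrt_nonneg _, Real.sq_sqrt (by positivity)⟩
  by_cases hc : r + x 4 = 0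
  · have hx4 : x 4 = -r := by linarith
    have h0 : x 0 = 0 := by nlinarith [sq_nonneg (x 0), sq_nonneg (x 1), sq_nonneg (x 2), sq_nonneg (x 3)]
    have h1 : x 1 = 0 := by nlinarith [sq_nonneg (x 0), sq_nonneg (x 1), sq_nonneg (x 2), sq_nonneg (x 3)]
    have h2 : x 2 = 0 := by nlinarith [sq_nonneg (x 0), sq_nonneg (x 1), sq_nonneg (x 2), sq_nonneg (x 3)]
    have h3 : x 3 = 0 := by nlinarith [sq_nonneg (x 0), sq_nonneg (x 1), sq_nonneg (x 2), sq_nonneg (x 3)]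
    obtain ⟨t, ht0, ht2⟩ : ∃ t : ℝ, 0 ≤ t ∧ t^2 = r :=
      ⟨Real.sqrt r, Real.sqrt_nonneg r, Real.sq_sqrt hr0⟩
    refine ⟨(WithLp.toLp 2 ![0,0,0,0, t, 0,0,0] : E8), ?_⟩
    ext j
    revert j
    apply fin5cases <;>
      simp only [h0', h1', h2', h3', h4', PiLp.toLp_apply, appB0, appB1, appB2, appB3, appB4, appB5, appB6, appB7]
    · rw [h0]; ring
    · rw [h1]; ring
    · rw [h2]; ring
    · rw [h3]; ring
    · rw [hx4, ht2]; ring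
  · have hrx : 0 ≤ r + x 4 := by nlinarith
    have hpos : 0 < r + x 4 := lt_of_le_of_ne hrx (Ne.symm hc)
    obtain ⟨s, hs0, hs2⟩ : ∃ s : ℝ, 0 < s ∧ s^2 = (r + x 4)/2 :=
      ⟨Real.sqrt _, Real.sqrt_pos.mpr (by linarith), Real.sq_sqrt (by linarith)⟩
    have hsne : s ≠ 0 := ne_of_gt hs0
    refine ⟨(WithLp.toLp 2 ![s,0,0,0, x 0/(2*s), x 1/(2*s), x 2/(2*s), x 3/(2*s)] : E8), ?_⟩
    have hsum : x 0^2 + x 1^2 + x 2^2 + x 3^2 = r^2 - x 4^2 := by linarith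
    ext j
    revert j
    apply fin5cases <;>
      simp only [h0', h1', h2', h3', h4', PiLp.toLp_apply, appB0, appB1, appB2, appB3, appB4, appB5, appB6, appB7]
    · field_simp; ring
    · field_simp; ring
    · field_simp; ring
    · field_simp; ring
    · rw [div_pow, div_pow, div_pow, div_pow]
      rw [show (2*s)^2 = 4*s^2 by ring]
      rw [← add_div, ← add_div, ← add_div, hsum, hs2]
      rw [show r^2 - x 4^2 = (4*((r + x 4)/2)) * ((r - x 4)/2) by ring]
      rw [mul_comm ((4:ℝ)*((r + x 4)/2)), mul_div_assoc,
        div_self (by linarith : (4:ℝ)*((r + x 4)/2) ≠ 0), mul_one]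
      ring

/-- the reduction via the Hopf map ℝ⁸ → ℝ⁵. -/
theorem stmt_8 (U : Set (EuclideanSpace ℝ (Fin 5))) (hU : IsSmoothDomain U)
    (h0 : (0 : EuclideanSpace ℝ (Fin 5)) ∉ closure U) (a : ℝ)
    (f : ℝ → ℝ) (hf : Continuous f) :
    (∀ v : EuclideanSpace ℝ (Fin 5) → ℝ,
      ContDiffOn ℝ 2 v U → ContinuousOn v (closure U) →
      (∀ x ∈ U, - lap v x + (a / (4 * ‖x‖)) * v x = (1 / (4 * ‖x‖)) * f (v x)) →
      (∀ x ∈ frontier U, v x = 0) →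
        (ContDiffOn ℝ 2 (v ∘ hopfH) (hopfH ⁻¹' U) ∧
         ContinuousOn (v ∘ hopfH) (closure (hopfH ⁻¹' U)) ∧
         (∀ z ∈ hopfH ⁻¹' U, - lap (v ∘ hopfH) z + a * (v ∘ hopfH) z = f ((v ∘ hopfH) z)) ∧
         (∀ z ∈ frontier (hopfH ⁻¹' U), (v ∘ hopfH) z = 0))) ∧
    (∀ v : EuclideanSpace ℝ (Fin 5) → ℝ, ContDiffOn ℝ 2 v U →
      (∀ z ∈ hopfH ⁻¹' U, - lap (v ∘ hopfH) z + a * (v ∘ hopfH) z = f ((v ∘ hopfH) z)) →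
      ∀ x ∈ U, - lap v x + (a / (4 * ‖x‖)) * v x = (1 / (4 * ‖x‖)) * f (v x)) := by
  have hUo := hU.isOpen
  have hcont : Continuous hopfH := (contDiff_hopf (n := 2)).continuous
  have hnorm_ne : ∀ x ∈ U, ‖x‖ ≠ 0 := by
    intro x hx
    have hx0 : x ≠ 0 := fun h => h0 (subset_closure (h ▸ hx))
    simpa [norm_eq_zero] using hx0
  constructor
  · intro v hv hvc hpde hbd
    refine ⟨?_, ?_, ?_, ?_⟩
    · exact hv.comp (contDiff_hopf (n := 2)).contDiffOn (fun z hz => hz)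
    · exact hvc.comp hcont.continuousOn
        (fun z hz => hcont.closure_preimage_subset U hz)
    · intro z hz
      have hxU : hopfH z ∈ U := hz
      have hne : ‖hopfH z‖ ≠ 0 := hnorm_ne _ hxU
      have heq := hpde (hopfH z) hxU
      have hl := lap_comp hUo hv hxU
      simp only [Function.comp_apply]
      rw [hl]
      field_simp at heq
      linear_combination heq
    · intro z hz
      have h1 : hopfH z ∈ closure U := hcont.closure_preimage_subset U hz.1
      have h2 : hopfH z ∉ U := by
        intro hmem
        exact hz.2 (by rwa [(hUo.preimage hcont).interior_eq])
      have hfr : hopfH z ∈ frontier U := ⟨h1, by rwa [hUo.interior_eq]⟩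
      simp only [Function.comp_apply]
      exact hbd _ hfr
  · intro v hv hpde x hx
    obtain ⟨z, hz⟩ := hopf_surj x
    have hxU : hopfH z ∈ U := by rw [hz]; exact hx
    have heq := hpde z hxU
    have hl := lap_comp hUo hv hxU
    rw [hl] at heq
    simp only [Function.comp_apply, hz] at heq
    have hne : ‖x‖ ≠ 0 := hnorm_ne _ hx
    field_simp
    linear_combination heq
end
end

section
/- The Hopf map π : ℝ⁸ = ℍ×ℍ → ℝ⁵ = ℍ×ℝ, π(z₁,z₂) := (2·conj(z₁)·z₂, |z₁|² − |z₂|²), satisfies: (i) each of its five real component functions is a harmonic polynomial on ℝ⁸, i.e. Δπ^γ ≡ 0 for γ = 1,…,5; (ii) |π(z₁,z₂)| = |z₁|² + |z₂|² for all (z₁,z₂) ∈ ℍ×ℍ; and (iii) at every point z ∈ ℝ⁸, the total derivative Dπ(z) : ℝ⁸ → ℝ⁵ satisfies Dπ(z) ∘ Dπ(z)* = 4(|z₁|²+|z₂|²)·id_{ℝ⁵}, where Dπ(z)* is the adjoint with respect to the Euclidean inner products; in particular π is horizontally conformal with dilation λ(z) = 2·‖z‖. -/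
lemma re2 : (2 : Quaternion ℝ).re = 2 := rfl
lemma imI2 : (2 : Quaternion ℝ).imI = 0 := rfl
lemma imJ2 : (2 : Quaternion ℝ).imJ = 0 := rfl
lemma imK2 : (2 : Quaternion ℝ).imK = 0 := rfl

lemma nq1 (x : EuclideanSpace ℝ (Fin 8)) :
    ‖quat1 x‖ ^ 2 = x 0 * x 0 + x 1 * x 1 + x 2 * x 2 + x 3 * x 3 := by
  rw [sq, ← Quaternion.normSq_eq_norm_mul_self]
  rw [Quaternion.normSq_def']; simp [quat1]; ring

lemma nq2 (x : EuclideanSpace ℝ (Fin 8)) :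
    ‖quat2 x‖ ^ 2 = x 4 * x 4 + x 5 * x 5 + x 6 * x 6 + x 7 * x 7 := by
  rw [sq, ← Quaternion.normSq_eq_norm_mul_self]
  rw [Quaternion.normSq_def']; simp [quat2]; ring

lemma hopf0 (x : EuclideanSpace ℝ (Fin 8)) :
    hopfH x 0 = 2*(x 0*x 4 + x 1*x 5 + x 2*x 6 + x 3*x 7) := by
  simp [hopfH, Quaternion.re_mul, re2, imI2, imJ2, imK2]; simp [quat1, quat2]; ring

lemma hopf1 (x : EuclideanSpace ℝ (Fin 8)) :
    hopfH x 1 = 2*(x 0*x 5 - x 1*x 4 - x 2*x 7 + x 3*x 6) := by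
  simp [hopfH, Quaternion.imI_mul, re2, imI2, imJ2, imK2]; simp [quat1, quat2]; ring

lemma hopf2 (x : EuclideanSpace ℝ (Fin 8)) :
    hopfH x 2 = 2*(x 0*x 6 + x 1*x 7 - x 2*x 4 - x 3*x 5) := by
  simp [hopfH, Quaternion.imJ_mul, re2, imI2, imJ2, imK2]; simp [quat1, quat2]; ring

lemma hopf3 (x : EuclideanSpace ℝ (Fin 8)) :
    hopfH x 3 = 2*(x 0*x 7 - x 1*x 6 + x 2*x 5 - x 3*x 4) := by
  simp [hopfH, Quaternion.imK_mul, re2, imI2, imJ2, imK2]; simp [quat1, quat2]; ring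

lemma hopf4 (x : EuclideanSpace ℝ (Fin 8)) :
    hopfH x 4 = (x 0*x 0 + x 1*x 1 + x 2*x 2 + x 3*x 3) - (x 4*x 4 + x 5*x 5 + x 6*x 6 + x 7*x 7) := by
  simp [hopfH, nq1, nq2]

noncomputable def pe (i : Fin 8) : EuclideanSpace ℝ (Fin 8) →L[ℝ] ℝ := EuclideanSpace.proj i

noncomputable def R0 : EuclideanSpace ℝ (Fin 8) →L[ℝ] EuclideanSpace ℝ (Fin 8) →L[ℝ] ℝ :=
  (2:ℝ) • ((pe 4).smulRight (pe 0) + (pe 0).smulRight (pe 4) + (pe 5).smulRight (pe 1) +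
      (pe 1).smulRight (pe 5) + (pe 6).smulRight (pe 2) + (pe 2).smulRight (pe 6) +
      (pe 7).smulRight (pe 3) + (pe 3).smulRight (pe 7))
noncomputable def R1 : EuclideanSpace ℝ (Fin 8) →L[ℝ] EuclideanSpace ℝ (Fin 8) →L[ℝ] ℝ :=
  (2:ℝ) • ((pe 5).smulRight (pe 0) + (pe 0).smulRight (pe 5) - (pe 4).smulRight (pe 1) -
      (pe 1).smulRight (pe 4) - (pe 7).smulRight (pe 2) - (pe 2).smulRight (pe 7) +
      (pe 6).smulRight (pe 3) + (pe 3).smulRight (pe 6))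
noncomputable def R2 : EuclideanSpace ℝ (Fin 8) →L[ℝ] EuclideanSpace ℝ (Fin 8) →L[ℝ] ℝ :=
  (2:ℝ) • ((pe 6).smulRight (pe 0) + (pe 0).smulRight (pe 6) + (pe 7).smulRight (pe 1) +
      (pe 1).smulRight (pe 7) - (pe 4).smulRight (pe 2) - (pe 2).smulRight (pe 4) -
      (pe 5).smulRight (pe 3) - (pe 3).smulRight (pe 5))
noncomputable def R3 : EuclideanSpace ℝ (Fin 8) →L[ℝ] EuclideanSpace ℝ (Fin 8) →L[ℝ] ℝ :=
  (2:ℝ) • ((pe 7).smulRight (pe 0) + (pe 0).smulRight (pe 7) - (pe 6).smulRight (pe 1) -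
      (pe 1).smulRight (pe 6) + (pe 5).smulRight (pe 2) + (pe 2).smulRight (pe 5) -
      (pe 4).smulRight (pe 3) - (pe 3).smulRight (pe 4))
noncomputable def R4 : EuclideanSpace ℝ (Fin 8) →L[ℝ] EuclideanSpace ℝ (Fin 8) →L[ℝ] ℝ :=
  (2:ℝ) • ((pe 0).smulRight (pe 0) + (pe 1).smulRight (pe 1) + (pe 2).smulRight (pe 2) +
      (pe 3).smulRight (pe 3) - (pe 4).smulRight (pe 4) - (pe 5).smulRight (pe 5) -
      (pe 6).smulRight (pe 6) - (pe 7).smulRight (pe 7))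

noncomputable def RR : Fin 5 → (EuclideanSpace ℝ (Fin 8) →L[ℝ] EuclideanSpace ℝ (Fin 8) →L[ℝ] ℝ) :=
  ![R0, R1, R2, R3, R4]

lemma RRc0 : RR 0 = R0 := rfl
lemma RRc1 : RR 1 = R1 := rfl
lemma RRc2 : RR 2 = R2 := rfl
lemma RRc3 : RR 3 = R3 := rfl
lemma RRc4 : RR 4 = R4 := rfl

set_option synthInstance.maxHeartbeats 200000 in
lemma hasR0 (w : EuclideanSpace ℝ (Fin 8)) :
    HasFDerivAt (fun x => hopfH x 0) (R0 w) w := by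
  have h0 : ∀ i : Fin 8, HasFDerivAt (fun x : EuclideanSpace ℝ (Fin 8) => x i) (pe i) w :=
    fun i => (pe i).hasFDerivAt
  have hfun : (fun x : EuclideanSpace ℝ (Fin 8) => hopfH x 0)
      = fun x => 2*(x 0*x 4 + x 1*x 5 + x 2*x 6 + x 3*x 7) := funext hopf0
  rw [hfun]
  have h := (((((h0 0).mul (h0 4)).add ((h0 1).mul (h0 5))).add
        ((h0 2).mul (h0 6))).add ((h0 3).mul (h0 7))).const_mul (2:ℝ)
  refine h.congr_fderiv ?_
  ext v
  simp [R0, pe, ContinuousLinearMap.smul_apply, smul_eq_mul]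
  ring

lemma hasR1 (w : EuclideanSpace ℝ (Fin 8)) :
    HasFDerivAt (fun x => hopfH x 1) (R1 w) w := by
  have h0 : ∀ i : Fin 8, HasFDerivAt (fun x : EuclideanSpace ℝ (Fin 8) => x i) (pe i) w :=
    fun i => (pe i).hasFDerivAt
  have hfun : (fun x : EuclideanSpace ℝ (Fin 8) => hopfH x 1)
      = fun x => 2*(x 0*x 5 - x 1*x 4 - x 2*x 7 + x 3*x 6) := funext hopf1
  rw [hfun]
  have h := (((((h0 0).mul (h0 5)).sub ((h0 1).mul (h0 4))).sub
        ((h0 2).mul (h0 7))).add ((h0 3).mul (h0 6))).const_mul (2:ℝ)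
  refine h.congr_fderiv ?_
  ext v
  simp [R1, pe, ContinuousLinearMap.smul_apply, smul_eq_mul]
  ring

lemma hasR2 (w : EuclideanSpace ℝ (Fin 8)) :
    HasFDerivAt (fun x => hopfH x 2) (R2 w) w := by
  have h0 : ∀ i : Fin 8, HasFDerivAt (fun x : EuclideanSpace ℝ (Fin 8) => x i) (pe i) w :=
    fun i => (pe i).hasFDerivAt
  have hfun : (fun x : EuclideanSpace ℝ (Fin 8) => hopfH x 2)
      = fun x => 2*(x 0*x 6 + x 1*x 7 - x 2*x 4 - x 3*x 5) := funext hopf2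
  rw [hfun]
  have h := (((((h0 0).mul (h0 6)).add ((h0 1).mul (h0 7))).sub
        ((h0 2).mul (h0 4))).sub ((h0 3).mul (h0 5))).const_mul (2:ℝ)
  refine h.congr_fderiv ?_
  ext v
  simp [R2, pe, ContinuousLinearMap.smul_apply, smul_eq_mul]
  ring

lemma hasR3 (w : EuclideanSpace ℝ (Fin 8)) :
    HasFDerivAt (fun x => hopfH x 3) (R3 w) w := by
  have h0 : ∀ i : Fin 8, HasFDerivAt (fun x : EuclideanSpace ℝ (Fin 8) => x i) (pe i) w :=
    fun i => (pe i).hasFDerivAt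
  have hfun : (fun x : EuclideanSpace ℝ (Fin 8) => hopfH x 3)
      = fun x => 2*(x 0*x 7 - x 1*x 6 + x 2*x 5 - x 3*x 4) := funext hopf3
  rw [hfun]
  have h := (((((h0 0).mul (h0 7)).sub ((h0 1).mul (h0 6))).add
        ((h0 2).mul (h0 5))).sub ((h0 3).mul (h0 4))).const_mul (2:ℝ)
  refine h.congr_fderiv ?_
  ext v
  simp [R3, pe, ContinuousLinearMap.smul_apply, smul_eq_mul]
  ring

lemma hasR4 (w : EuclideanSpace ℝ (Fin 8)) :
    HasFDerivAt (fun x => hopfH x 4) (R4 w) w := by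
  have h0 : ∀ i : Fin 8, HasFDerivAt (fun x : EuclideanSpace ℝ (Fin 8) => x i) (pe i) w :=
    fun i => (pe i).hasFDerivAt
  have hfun : (fun x : EuclideanSpace ℝ (Fin 8) => hopfH x 4)
      = fun x => (x 0*x 0 + x 1*x 1 + x 2*x 2 + x 3*x 3)
            - (x 4*x 4 + x 5*x 5 + x 6*x 6 + x 7*x 7) := funext hopf4
  rw [hfun]
  have h := ((((((h0 0).mul (h0 0)).add ((h0 1).mul (h0 1))).add
        ((h0 2).mul (h0 2))).add ((h0 3).mul (h0 3))).sub
        (((((h0 4).mul (h0 4)).add ((h0 5).mul (h0 5))).add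
        ((h0 6).mul (h0 6))).add ((h0 7).mul (h0 7))))
  refine h.congr_fderiv ?_
  ext v
  simp [R4, pe, ContinuousLinearMap.smul_apply, smul_eq_mul]
  ring

lemma hasR (γ : Fin 5) (w : EuclideanSpace ℝ (Fin 8)) :
    HasFDerivAt (fun x => hopfH x γ) (RR γ w) w := by
  fin_cases γ
  · exact hasR0 w
  · exact hasR1 w
  · exact hasR2 w
  · exact hasR3 w
  · exact hasR4 w

noncomputable def DD (z : EuclideanSpace ℝ (Fin 8)) :
    EuclideanSpace ℝ (Fin 8) →L[ℝ] EuclideanSpace ℝ (Fin 5) :=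
  ((PiLp.continuousLinearEquiv 2 ℝ (fun _ : Fin 5 => ℝ)).symm.toContinuousLinearMap).comp
    (ContinuousLinearMap.pi (fun γ => RR γ z))

lemma hasD (z : EuclideanSpace ℝ (Fin 8)) : HasFDerivAt hopfH (DD z) z := by
  have hg : HasFDerivAt (fun x (γ : Fin 5) => hopfH x γ)
      (ContinuousLinearMap.pi fun γ => RR γ z) z := hasFDerivAt_pi.2 fun γ => hasR γ z
  exact ((PiLp.continuousLinearEquiv 2 ℝ (fun _ : Fin 5 => ℝ)).symm.toContinuousLinearMap
    ).hasFDerivAt.comp z hg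

lemma DD_apply (z v : EuclideanSpace ℝ (Fin 8)) (γ : Fin 5) : DD z v γ = RR γ z v := rfl

noncomputable def g0 (z : EuclideanSpace ℝ (Fin 8)) : EuclideanSpace ℝ (Fin 8) :=
  WithLp.toLp 2 ![2*z 4, 2*z 5, 2*z 6, 2*z 7, 2*z 0, 2*z 1, 2*z 2, 2*z 3]
noncomputable def g1 (z : EuclideanSpace ℝ (Fin 8)) : EuclideanSpace ℝ (Fin 8) :=
  WithLp.toLp 2 ![2*z 5, -(2*z 4), -(2*z 7), 2*z 6, -(2*z 1), 2*z 0, 2*z 3, -(2*z 2)]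
noncomputable def g2 (z : EuclideanSpace ℝ (Fin 8)) : EuclideanSpace ℝ (Fin 8) :=
  WithLp.toLp 2 ![2*z 6, 2*z 7, -(2*z 4), -(2*z 5), -(2*z 2), -(2*z 3), 2*z 0, 2*z 1]
noncomputable def g3 (z : EuclideanSpace ℝ (Fin 8)) : EuclideanSpace ℝ (Fin 8) :=
  WithLp.toLp 2 ![2*z 7, -(2*z 6), 2*z 5, -(2*z 4), -(2*z 3), 2*z 2, -(2*z 1), 2*z 0]
noncomputable def g4 (z : EuclideanSpace ℝ (Fin 8)) : EuclideanSpace ℝ (Fin 8) :=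
  WithLp.toLp 2 ![2*z 0, 2*z 1, 2*z 2, 2*z 3, -(2*z 4), -(2*z 5), -(2*z 6), -(2*z 7)]

noncomputable def p5 (γ : Fin 5) : EuclideanSpace ℝ (Fin 5) →L[ℝ] ℝ := EuclideanSpace.proj γ

noncomputable def AA (z : EuclideanSpace ℝ (Fin 8)) :
    EuclideanSpace ℝ (Fin 5) →L[ℝ] EuclideanSpace ℝ (Fin 8) :=
  (p5 0).smulRight (g0 z) + (p5 1).smulRight (g1 z) + (p5 2).smulRight (g2 z) +
    (p5 3).smulRight (g3 z) + (p5 4).smulRight (g4 z)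

lemma g0c0 (z : EuclideanSpace ℝ (Fin 8)) : g0 z 0 = 2*z 4 := rfl
lemma g0c1 (z : EuclideanSpace ℝ (Fin 8)) : g0 z 1 = 2*z 5 := rfl
lemma g0c2 (z : EuclideanSpace ℝ (Fin 8)) : g0 z 2 = 2*z 6 := rfl
lemma g0c3 (z : EuclideanSpace ℝ (Fin 8)) : g0 z 3 = 2*z 7 := rfl
lemma g0c4 (z : EuclideanSpace ℝ (Fin 8)) : g0 z 4 = 2*z 0 := rfl
lemma g0c5 (z : EuclideanSpace ℝ (Fin 8)) : g0 z 5 = 2*z 1 := rfl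
lemma g0c6 (z : EuclideanSpace ℝ (Fin 8)) : g0 z 6 = 2*z 2 := rfl
lemma g0c7 (z : EuclideanSpace ℝ (Fin 8)) : g0 z 7 = 2*z 3 := rfl
lemma g1c0 (z : EuclideanSpace ℝ (Fin 8)) : g1 z 0 = 2*z 5 := rfl
lemma g1c1 (z : EuclideanSpace ℝ (Fin 8)) : g1 z 1 = -(2*z 4) := rfl
lemma g1c2 (z : EuclideanSpace ℝ (Fin 8)) : g1 z 2 = -(2*z 7) := rfl
lemma g1c3 (z : EuclideanSpace ℝ (Fin 8)) : g1 z 3 = 2*z 6 := rfl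
lemma g1c4 (z : EuclideanSpace ℝ (Fin 8)) : g1 z 4 = -(2*z 1) := rfl
lemma g1c5 (z : EuclideanSpace ℝ (Fin 8)) : g1 z 5 = 2*z 0 := rfl
lemma g1c6 (z : EuclideanSpace ℝ (Fin 8)) : g1 z 6 = 2*z 3 := rfl
lemma g1c7 (z : EuclideanSpace ℝ (Fin 8)) : g1 z 7 = -(2*z 2) := rfl
lemma g2c0 (z : EuclideanSpace ℝ (Fin 8)) : g2 z 0 = 2*z 6 := rfl
lemma g2c1 (z : EuclideanSpace ℝ (Fin 8)) : g2 z 1 = 2*z 7 := rfl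
lemma g2c2 (z : EuclideanSpace ℝ (Fin 8)) : g2 z 2 = -(2*z 4) := rfl
lemma g2c3 (z : EuclideanSpace ℝ (Fin 8)) : g2 z 3 = -(2*z 5) := rfl
lemma g2c4 (z : EuclideanSpace ℝ (Fin 8)) : g2 z 4 = -(2*z 2) := rfl
lemma g2c5 (z : EuclideanSpace ℝ (Fin 8)) : g2 z 5 = -(2*z 3) := rfl
lemma g2c6 (z : EuclideanSpace ℝ (Fin 8)) : g2 z 6 = 2*z 0 := rfl
lemma g2c7 (z : EuclideanSpace ℝ (Fin 8)) : g2 z 7 = 2*z 1 := rfl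
lemma g3c0 (z : EuclideanSpace ℝ (Fin 8)) : g3 z 0 = 2*z 7 := rfl
lemma g3c1 (z : EuclideanSpace ℝ (Fin 8)) : g3 z 1 = -(2*z 6) := rfl
lemma g3c2 (z : EuclideanSpace ℝ (Fin 8)) : g3 z 2 = 2*z 5 := rfl
lemma g3c3 (z : EuclideanSpace ℝ (Fin 8)) : g3 z 3 = -(2*z 4) := rfl
lemma g3c4 (z : EuclideanSpace ℝ (Fin 8)) : g3 z 4 = -(2*z 3) := rfl
lemma g3c5 (z : EuclideanSpace ℝ (Fin 8)) : g3 z 5 = 2*z 2 := rfl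
lemma g3c6 (z : EuclideanSpace ℝ (Fin 8)) : g3 z 6 = -(2*z 1) := rfl
lemma g3c7 (z : EuclideanSpace ℝ (Fin 8)) : g3 z 7 = 2*z 0 := rfl
lemma g4c0 (z : EuclideanSpace ℝ (Fin 8)) : g4 z 0 = 2*z 0 := rfl
lemma g4c1 (z : EuclideanSpace ℝ (Fin 8)) : g4 z 1 = 2*z 1 := rfl
lemma g4c2 (z : EuclideanSpace ℝ (Fin 8)) : g4 z 2 = 2*z 2 := rfl
lemma g4c3 (z : EuclideanSpace ℝ (Fin 8)) : g4 z 3 = 2*z 3 := rfl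
lemma g4c4 (z : EuclideanSpace ℝ (Fin 8)) : g4 z 4 = -(2*z 4) := rfl
lemma g4c5 (z : EuclideanSpace ℝ (Fin 8)) : g4 z 5 = -(2*z 5) := rfl
lemma g4c6 (z : EuclideanSpace ℝ (Fin 8)) : g4 z 6 = -(2*z 6) := rfl
lemma g4c7 (z : EuclideanSpace ℝ (Fin 8)) : g4 z 7 = -(2*z 7) := rfl

set_option maxHeartbeats 1000000 in
lemma adjD (z : EuclideanSpace ℝ (Fin 8)) :
    ContinuousLinearMap.adjoint (DD z) = AA z := by
  refine ((ContinuousLinearMap.eq_adjoint_iff (AA z) (DD z)).2 fun x y => ?_).symm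
  simp only [PiLp.inner_apply, RCLike.inner_apply, conj_trivial, Fin.sum_univ_eight,
    Fin.sum_univ_five, AA, ContinuousLinearMap.add_apply, ContinuousLinearMap.smulRight_apply,
    p5, PiLp.proj_apply, PiLp.add_apply, PiLp.smul_apply, smul_eq_mul,
    g0c0, g0c1, g0c2, g0c3, g0c4, g0c5, g0c6, g0c7, g1c0, g1c1, g1c2, g1c3, g1c4, g1c5, g1c6, g1c7, g2c0, g2c1, g2c2, g2c3, g2c4, g2c5, g2c6, g2c7, g3c0, g3c1, g3c2, g3c3, g3c4, g3c5, g3c6, g3c7, g4c0, g4c1, g4c2, g4c3, g4c4, g4c5, g4c6, g4c7, DD_apply, RRc0, RRc1, RRc2, RRc3, RRc4,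
    R0, R1, R2, R3, R4, pe, ContinuousLinearMap.smul_apply, ContinuousLinearMap.sub_apply,
    Matrix.cons_val_zero, Matrix.cons_val_one, Matrix.head_cons]
  ring

set_option maxHeartbeats 1000000 in
lemma cco0 (z : EuclideanSpace ℝ (Fin 8)) (x : EuclideanSpace ℝ (Fin 5)) :
    DD z (AA z x) 0 = (4 * (‖quat1 z‖ ^ 2 + ‖quat2 z‖ ^ 2)) * x 0 := by
  simp only [ContinuousLinearMap.coe_comp', Function.comp_apply, DD_apply,
      PiLp.smul_apply, smul_eq_mul, nq1, nq2,
      RRc0, RRc1, RRc2, RRc3, RRc4, R0, R1, R2, R3, R4, pe, PiLp.proj_apply,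
      ContinuousLinearMap.add_apply, ContinuousLinearMap.sub_apply,
      ContinuousLinearMap.smul_apply,
      ContinuousLinearMap.smulRight_apply, AA, p5,
      g0c0, g0c1, g0c2, g0c3, g0c4, g0c5, g0c6, g0c7,
      g1c0, g1c1, g1c2, g1c3, g1c4, g1c5, g1c6, g1c7,
      g2c0, g2c1, g2c2, g2c3, g2c4, g2c5, g2c6, g2c7,
      g3c0, g3c1, g3c2, g3c3, g3c4, g3c5, g3c6, g3c7,
      g4c0, g4c1, g4c2, g4c3, g4c4, g4c5, g4c6, g4c7, PiLp.add_apply]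
  ring

set_option maxHeartbeats 1000000 in
lemma cco1 (z : EuclideanSpace ℝ (Fin 8)) (x : EuclideanSpace ℝ (Fin 5)) :
    DD z (AA z x) 1 = (4 * (‖quat1 z‖ ^ 2 + ‖quat2 z‖ ^ 2)) * x 1 := by
  simp only [ContinuousLinearMap.coe_comp', Function.comp_apply, DD_apply,
      PiLp.smul_apply, smul_eq_mul, nq1, nq2,
      RRc0, RRc1, RRc2, RRc3, RRc4, R0, R1, R2, R3, R4, pe, PiLp.proj_apply,
      ContinuousLinearMap.add_apply, ContinuousLinearMap.sub_apply,
      ContinuousLinearMap.smul_apply,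
      ContinuousLinearMap.smulRight_apply, AA, p5,
      g0c0, g0c1, g0c2, g0c3, g0c4, g0c5, g0c6, g0c7,
      g1c0, g1c1, g1c2, g1c3, g1c4, g1c5, g1c6, g1c7,
      g2c0, g2c1, g2c2, g2c3, g2c4, g2c5, g2c6, g2c7,
      g3c0, g3c1, g3c2, g3c3, g3c4, g3c5, g3c6, g3c7,
      g4c0, g4c1, g4c2, g4c3, g4c4, g4c5, g4c6, g4c7, PiLp.add_apply]
  ring

set_option maxHeartbeats 1000000 in
lemma cco2 (z : EuclideanSpace ℝ (Fin 8)) (x : EuclideanSpace ℝ (Fin 5)) :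
    DD z (AA z x) 2 = (4 * (‖quat1 z‖ ^ 2 + ‖quat2 z‖ ^ 2)) * x 2 := by
  simp only [ContinuousLinearMap.coe_comp', Function.comp_apply, DD_apply,
      PiLp.smul_apply, smul_eq_mul, nq1, nq2,
      RRc0, RRc1, RRc2, RRc3, RRc4, R0, R1, R2, R3, R4, pe, PiLp.proj_apply,
      ContinuousLinearMap.add_apply, ContinuousLinearMap.sub_apply,
      ContinuousLinearMap.smul_apply,
      ContinuousLinearMap.smulRight_apply, AA, p5,
      g0c0, g0c1, g0c2, g0c3, g0c4, g0c5, g0c6, g0c7,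
      g1c0, g1c1, g1c2, g1c3, g1c4, g1c5, g1c6, g1c7,
      g2c0, g2c1, g2c2, g2c3, g2c4, g2c5, g2c6, g2c7,
      g3c0, g3c1, g3c2, g3c3, g3c4, g3c5, g3c6, g3c7,
      g4c0, g4c1, g4c2, g4c3, g4c4, g4c5, g4c6, g4c7, PiLp.add_apply]
  ring

set_option maxHeartbeats 1000000 in
lemma cco3 (z : EuclideanSpace ℝ (Fin 8)) (x : EuclideanSpace ℝ (Fin 5)) :
    DD z (AA z x) 3 = (4 * (‖quat1 z‖ ^ 2 + ‖quat2 z‖ ^ 2)) * x 3 := by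
  simp only [ContinuousLinearMap.coe_comp', Function.comp_apply, DD_apply,
      PiLp.smul_apply, smul_eq_mul, nq1, nq2,
      RRc0, RRc1, RRc2, RRc3, RRc4, R0, R1, R2, R3, R4, pe, PiLp.proj_apply,
      ContinuousLinearMap.add_apply, ContinuousLinearMap.sub_apply,
      ContinuousLinearMap.smul_apply,
      ContinuousLinearMap.smulRight_apply, AA, p5,
      g0c0, g0c1, g0c2, g0c3, g0c4, g0c5, g0c6, g0c7,
      g1c0, g1c1, g1c2, g1c3, g1c4, g1c5, g1c6, g1c7,
      g2c0, g2c1, g2c2, g2c3, g2c4, g2c5, g2c6, g2c7,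
      g3c0, g3c1, g3c2, g3c3, g3c4, g3c5, g3c6, g3c7,
      g4c0, g4c1, g4c2, g4c3, g4c4, g4c5, g4c6, g4c7, PiLp.add_apply]
  ring

set_option maxHeartbeats 1000000 in
lemma cco4 (z : EuclideanSpace ℝ (Fin 8)) (x : EuclideanSpace ℝ (Fin 5)) :
    DD z (AA z x) 4 = (4 * (‖quat1 z‖ ^ 2 + ‖quat2 z‖ ^ 2)) * x 4 := by
  simp only [ContinuousLinearMap.coe_comp', Function.comp_apply, DD_apply,
      PiLp.smul_apply, smul_eq_mul, nq1, nq2,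
      RRc0, RRc1, RRc2, RRc3, RRc4, R0, R1, R2, R3, R4, pe, PiLp.proj_apply,
      ContinuousLinearMap.add_apply, ContinuousLinearMap.sub_apply,
      ContinuousLinearMap.smul_apply,
      ContinuousLinearMap.smulRight_apply, AA, p5,
      g0c0, g0c1, g0c2, g0c3, g0c4, g0c5, g0c6, g0c7,
      g1c0, g1c1, g1c2, g1c3, g1c4, g1c5, g1c6, g1c7,
      g2c0, g2c1, g2c2, g2c3, g2c4, g2c5, g2c6, g2c7,
      g3c0, g3c1, g3c2, g3c3, g3c4, g3c5, g3c6, g3c7,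
      g4c0, g4c1, g4c2, g4c3, g4c4, g4c5, g4c6, g4c7, PiLp.add_apply]
  ring

lemma compDA (z : EuclideanSpace ℝ (Fin 8)) :
    (DD z).comp (AA z) = (4 * (‖quat1 z‖ ^ 2 + ‖quat2 z‖ ^ 2)) •
      ContinuousLinearMap.id ℝ (EuclideanSpace ℝ (Fin 5)) := by
  refine ContinuousLinearMap.ext fun x => PiLp.ext fun γ => ?_
  fin_cases γ
  · exact cco0 z x
  · exact cco1 z x
  · exact cco2 z x
  · exact cco3 z x
  · exact cco4 z x
set_option maxHeartbeats 1000000 in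
lemma lap0 (z : EuclideanSpace ℝ (Fin 8)) : lap (fun w => hopfH w 0) z = 0 := by
  have hf : (fderiv ℝ fun w => hopfH w (0 : Fin 5)) = ⇑R0 :=
    funext fun w => (hasR0 w).fderiv
  simp only [lap, iteratedFDeriv_two_apply, Matrix.cons_val_zero, Matrix.cons_val_one,
    Matrix.head_cons, hf, ContinuousLinearMap.fderiv]
  simp [Fin.sum_univ_eight, R0, pe, EuclideanSpace.single_apply,
    ContinuousLinearMap.smul_apply, smul_eq_mul]

set_option maxHeartbeats 1000000 in
lemma lap1 (z : EuclideanSpace ℝ (Fin 8)) : lap (fun w => hopfH w 1) z = 0 := by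
  have hf : (fderiv ℝ fun w => hopfH w (1 : Fin 5)) = ⇑R1 :=
    funext fun w => (hasR1 w).fderiv
  simp only [lap, iteratedFDeriv_two_apply, Matrix.cons_val_zero, Matrix.cons_val_one,
    Matrix.head_cons, hf, ContinuousLinearMap.fderiv]
  simp [Fin.sum_univ_eight, R1, pe, EuclideanSpace.single_apply,
    ContinuousLinearMap.smul_apply, smul_eq_mul]

set_option maxHeartbeats 1000000 in
lemma lap2 (z : EuclideanSpace ℝ (Fin 8)) : lap (fun w => hopfH w 2) z = 0 := by
  have hf : (fderiv ℝ fun w => hopfH w (2 : Fin 5)) = ⇑R2 :=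
    funext fun w => (hasR2 w).fderiv
  simp only [lap, iteratedFDeriv_two_apply, Matrix.cons_val_zero, Matrix.cons_val_one,
    Matrix.head_cons, hf, ContinuousLinearMap.fderiv]
  simp [Fin.sum_univ_eight, R2, pe, EuclideanSpace.single_apply,
    ContinuousLinearMap.smul_apply, smul_eq_mul]

set_option maxHeartbeats 1000000 in
lemma lap3 (z : EuclideanSpace ℝ (Fin 8)) : lap (fun w => hopfH w 3) z = 0 := by
  have hf : (fderiv ℝ fun w => hopfH w (3 : Fin 5)) = ⇑R3 :=
    funext fun w => (hasR3 w).fderiv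
  simp only [lap, iteratedFDeriv_two_apply, Matrix.cons_val_zero, Matrix.cons_val_one,
    Matrix.head_cons, hf, ContinuousLinearMap.fderiv]
  simp [Fin.sum_univ_eight, R3, pe, EuclideanSpace.single_apply,
    ContinuousLinearMap.smul_apply, smul_eq_mul]

set_option maxHeartbeats 1000000 in
lemma lap4 (z : EuclideanSpace ℝ (Fin 8)) : lap (fun w => hopfH w 4) z = 0 := by
  have hf : (fderiv ℝ fun w => hopfH w (4 : Fin 5)) = ⇑R4 :=
    funext fun w => (hasR4 w).fderiv
  simp only [lap, iteratedFDeriv_two_apply, Matrix.cons_val_zero, Matrix.cons_val_one,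
    Matrix.head_cons, hf, ContinuousLinearMap.fderiv]
  simp [Fin.sum_univ_eight, R4, pe, EuclideanSpace.single_apply,
    ContinuousLinearMap.smul_apply, smul_eq_mul]

lemma norm_hopf_s19 (z : EuclideanSpace ℝ (Fin 8)) :
    ‖hopfH z‖ = ‖quat1 z‖ ^ 2 + ‖quat2 z‖ ^ 2 := by
  have h1 : (0:ℝ) ≤ ‖quat1 z‖ ^ 2 + ‖quat2 z‖ ^ 2 := by positivity
  have h2 : (∑ i, ‖hopfH z i‖ ^ 2) = (‖quat1 z‖ ^ 2 + ‖quat2 z‖ ^ 2) ^ 2 := by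
    simp only [Fin.sum_univ_five, hopf0, hopf1, hopf2, hopf3, hopf4, nq1, nq2,
      Real.norm_eq_abs, sq_abs]
    ring
  rw [EuclideanSpace.norm_eq, h2, Real.sqrt_sq h1]

lemma norm_z (z : EuclideanSpace ℝ (Fin 8)) :
    4 * (‖quat1 z‖ ^ 2 + ‖quat2 z‖ ^ 2) = (2 * ‖z‖) ^ 2 := by
  have h2 : (∑ i, ‖z i‖ ^ 2) = ‖quat1 z‖ ^ 2 + ‖quat2 z‖ ^ 2 := by
    simp only [Fin.sum_univ_eight, nq1, nq2, Real.norm_eq_abs, sq_abs]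
    ring
  have h3 : ‖z‖ ^ 2 = ‖quat1 z‖ ^ 2 + ‖quat2 z‖ ^ 2 := by
    rw [EuclideanSpace.norm_eq, Real.sq_sqrt (by positivity), h2]
  rw [mul_pow, h3]; ring

/-- the Hopf map ℝ⁸ → ℝ⁵ has harmonic components, satisfies
|π(z)| = |z₁|² + |z₂|², and is horizontally conformal with
Dπ(z) ∘ Dπ(z)* = 4(|z₁|²+|z₂|²)·id, i.e. dilation λ(z) = 2‖z‖. -/
theorem stmt_19 :
    (∀ γ : Fin 5, ∀ z : EuclideanSpace ℝ (Fin 8), lap (fun w => hopfH w γ) z = 0) ∧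
    (∀ z : EuclideanSpace ℝ (Fin 8), ‖hopfH z‖ = ‖quat1 z‖ ^ 2 + ‖quat2 z‖ ^ 2) ∧
    (∀ z : EuclideanSpace ℝ (Fin 8),
      (fderiv ℝ hopfH z).comp (ContinuousLinearMap.adjoint (fderiv ℝ hopfH z)) =
        (4 * (‖quat1 z‖ ^ 2 + ‖quat2 z‖ ^ 2)) •
          ContinuousLinearMap.id ℝ (EuclideanSpace ℝ (Fin 5)) ∧
      4 * (‖quat1 z‖ ^ 2 + ‖quat2 z‖ ^ 2) = (2 * ‖z‖) ^ 2) := by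
  refine ⟨?_, norm_hopf_s19, fun z => ⟨?_, norm_z z⟩⟩
  · intro γ z
    fin_cases γ
    · exact lap0 z
    · exact lap1 z
    · exact lap2 z
    · exact lap3 z
    · exact lap4 z
  · rw [(hasD z).fderiv, adjD z, compDA z]
end
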